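/- Let V be a ℚ-vector space with dim_ℚ V = 2 and let L be a ℚ-subalgebra of End_ℚ(V) that is a division ring. Then L is commutative. -/

import Mathlib

set_option maxHeartbeats 1000000 in
set_option synthInstance.maxHeartbeats 100000 in
theorem div_subalgebra_aux {L : Type*} [DivisionRing L] [Algebra ℚ L]
    {V : Type*} [AddCommGroup V] [Module ℚ V] [Module L V] [IsScalarTower ℚ L V]
    (hV : Module.finrank ℚ V = 2) :
    ∀ x y : L, x * y = y * x := by
  have hmul : Module.finrank ℚ L * Module.finrank L V = 2 := by
    rw [Module.finrank_mul_finrank ℚ L V, hV]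
  haveI : FiniteDimensional ℚ L := FiniteDimensional.of_finrank_pos (by
    rcases Nat.eq_zero_or_pos (Module.finrank ℚ L) with h | h
    · rw [h] at hmul; simp at hmul
    · exact h)
  have hle : Module.finrank ℚ L ≤ 2 := Nat.le_of_dvd (by norm_num) ⟨_, hmul.symm⟩
  intro x y
  have hnli : ¬ LinearIndependent ℚ ![(1 : L), x, y] := by
    intro h
    have := h.fintype_card_le_finrank
    simp at this
    omega
  rw [Fintype.not_linearIndependent_iff] at hnli
  obtain ⟨g, hsum, i, hi⟩ := hnli
  rw [Fin.sum_univ_three] at hsum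
  simp only [Matrix.cons_val_zero, Matrix.cons_val_one, Matrix.head_cons,
    Matrix.cons_val_two, Matrix.tail_cons] at hsum
  show Commute x y
  by_cases hg2 : g 2 ≠ 0
  · have h2 : g 2 • y = -(g 0 • (1 : L) + g 1 • x) :=
      eq_neg_of_add_eq_zero_right hsum
    have hy : y = ((g 2)⁻¹ * g 0) • -(1 : L) + ((g 2)⁻¹ * g 1) • -x := by
      have : y = (g 2)⁻¹ • (g 2 • y) := by
        rw [smul_smul, inv_mul_cancel₀ hg2, one_smul]
      rw [this, h2]
      module
    rw [hy]
    exact (((Commute.one_right x).neg_right.smul_right _).add_right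
      (((Commute.refl x).neg_right).smul_right _))
  · push_neg at hg2
    rw [hg2, zero_smul, add_zero] at hsum
    by_cases hg1 : g 1 ≠ 0
    · have h1 : g 1 • x = -(g 0 • (1 : L)) := eq_neg_of_add_eq_zero_right hsum
      have hx : x = ((g 1)⁻¹ * g 0) • -(1 : L) := by
        have : x = (g 1)⁻¹ • (g 1 • x) := by
          rw [smul_smul, inv_mul_cancel₀ hg1, one_smul]
        rw [this, h1]
        module
      rw [hx]
      exact ((Commute.one_left y).neg_left.smul_left _)
    · push_neg at hg1
      rw [hg1, zero_smul, add_zero] at hsum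
      have hg0 : g 0 ≠ 0 := by
        fin_cases i <;> simp_all
      exact absurd hsum (by
        rw [smul_eq_zero]
        push_neg
        exact ⟨hg0, one_ne_zero⟩)

set_option maxHeartbeats 1000000 in
set_option synthInstance.maxHeartbeats 100000 in
/-- If `V` is a `2`-dimensional `ℚ`-vector space and `L` is a `ℚ`-subalgebra of `End_ℚ(V)`
that is a division ring, then `L` is commutative. -/
theorem div_subalgebra_of_end_two_dim_comm
    (V : Type*) [AddCommGroup V] [Module ℚ V]
    (hV : Module.finrank ℚ V = 2)
    (L : Subalgebra ℚ (Module.End ℚ V))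
    (hL : ∀ x : L, x ≠ 0 → IsUnit x) :
    ∀ x y : L, x * y = y * x := by
  have hVnt : Nontrivial V := by
    apply Module.nontrivial_of_finrank_pos (R := ℚ); omega
  have hLnt : Nontrivial L := by
    refine ⟨0, 1, fun h01 => ?_⟩
    have h1 : (1 : Module.End ℚ V) = 0 := by
      simpa using congrArg (Subtype.val) h01.symm
    obtain ⟨v, hv⟩ := exists_ne (0 : V)
    apply hv
    calc v = (1 : Module.End ℚ V) v := rfl
    _ = 0 := by rw [h1]; rfl
  letI iDR : DivisionRing L :=
    DivisionRing.ofIsUnitOrEqZero (fun a => or_iff_not_imp_right.mpr (hL a))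
  letI iAlg : Algebra ℚ L := Subalgebra.algebra L
  letI iMod : Module L V :=
    Module.compHom V ((L.val : L →ₐ[ℚ] Module.End ℚ V) : L →+* Module.End ℚ V)
  letI iTow : IsScalarTower ℚ L V := by
    refine ⟨fun r x v => ?_⟩
    show ((r • x : L) : Module.End ℚ V) v = r • ((x : Module.End ℚ V) v)
    simp
  exact div_subalgebra_aux (V := V) hV
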